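/- For the symmetric random walk whose starting point X_0 is chosen uniformly at random from T_N = {0,1,…,N}, for any fixed β ∈ (0,1), the probability that the site ⌊βN⌋ is visited before the exit time τ_N converges to 1/2 as N → ∞. -/

import Mathlib

open Filter Topology

/-- Position of the nearest-neighbor walk after the steps `w` (`true` = one step right,
`false` = one step left), started from `x`. -/
def walkPos (x : ℤ) (w : List Bool) : ℤ :=
  x + (w.count true : ℤ) - (w.count false : ℤ)

/-- `w` is the step sequence of a trajectory on `{0, 1, …, N}` started at `x` and run
exactly until the exit time `τ_N = T_0 ∧ T_N`: all positions strictly before the last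
step lie strictly inside `(0, N)`, and the final position is `0` or `N`. -/
def IsExitPath (N : ℕ) (x : ℤ) (w : List Bool) : Prop :=
  (∀ k < w.length, 0 < walkPos x (w.take k) ∧ walkPos x (w.take k) < (N : ℤ)) ∧
    (walkPos x w = 0 ∨ walkPos x w = (N : ℤ))

/-- Probability weight of the step sequence `w` when each step goes right with
probability `p` and left with probability `1 - p`, independently. -/
noncomputable def wt (p : ℝ) (w : List Bool) : ℝ :=
  p ^ w.count true * (1 - p) ^ w.count false

/-- `prob N p x S` is the probability, for the walk on `{0, …, N}` with right-step
probability `p` started at `x` and stopped at the exit time `τ_N`, that its stopped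
trajectory (recorded as the step sequence up to time `τ_N`) satisfies `S`. -/
noncomputable def prob (N : ℕ) (p : ℝ) (x : ℤ) (S : List Bool → Prop) : ℝ :=
  ∑' w : List Bool, Set.indicator {w | IsExitPath N x w ∧ S w} (wt p) w

/-- Expectation of `f` of the stopped trajectory for the walk started at `x`. -/
noncomputable def expect (N : ℕ) (p : ℝ) (x : ℤ) (f : List Bool → ℝ) : ℝ :=
  ∑' w : List Bool, Set.indicator {w | IsExitPath N x w} (fun w => wt p w * f w) w

/-- Probability for the walk whose starting point is uniformly distributed on
`{0, 1, …, N}`; the event `S` may depend on the starting point. -/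
noncomputable def probUniform (N : ℕ) (p : ℝ) (S : ℤ → List Bool → Prop) : ℝ :=
  (∑ x ∈ Finset.range (N + 1), prob N p (x : ℤ) (S (x : ℤ))) / (N + 1)

/-- The set of sites visited by the stopped walk up to time `τ_N` (time `0` included). -/
def rangeSet (x : ℤ) (w : List Bool) : Finset ℤ :=
  (Finset.range (w.length + 1)).image fun k => walkPos x (w.take k)

/-- The range `R_N`: the number of distinct sites visited up to the exit time. -/
def rangeCount (x : ℤ) (w : List Bool) : ℕ := (rangeSet x w).card

/-- The local time `G(y) = Σ_{k=0}^{τ_N} 1_{X_k = y}` of the stopped trajectory `w`. -/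
def localTime (x y : ℤ) (w : List Bool) : ℕ :=
  ((Finset.range (w.length + 1)).filter fun k => walkPos x (w.take k) = y).card

/-- The event `T_y < τ_N`: the walk started at `x` visits `y` at some time
`k ≥ 1` strictly before the end of the stopped trajectory `w`. -/
def hitsBefore (x y : ℤ) (w : List Bool) : Prop :=
  ∃ k, 1 ≤ k ∧ k < w.length ∧ walkPos x (w.take k) = y


open ENNReal

section Aux


def stp (b : Bool) : ℤ := if b then 1 else -1

@[simp] lemma walkPos_nil (x : ℤ) : walkPos x [] = x := by simp [walkPos]

lemma walkPos_cons (x : ℤ) (b : Bool) (w : List Bool) :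
    walkPos x (b :: w) = walkPos (x + stp b) w := by
  cases b <;> simp [walkPos, stp, List.count_cons] <;> ring

noncomputable def wtE (w : List Bool) : ℝ≥0∞ := 2⁻¹ ^ w.length

lemma wtE_cons (b : Bool) (w : List Bool) : wtE (b :: w) = 2⁻¹ * wtE w := by
  simp [wtE, pow_succ]; ring

lemma wtE_ne_top (w : List Bool) : wtE w ≠ ⊤ := by
  simp only [wtE]
  exact ENNReal.pow_ne_top (by simp)

lemma count_add_count (w : List Bool) : w.count true + w.count false = w.length := by
  induction w with
  | nil => simp
  | cons b t ih => cases b <;> simp [List.count_cons] <;> omega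

lemma wt_half (w : List Bool) : (wtE w).toReal = wt (1/2) w := by
  have h := count_add_count w
  rw [wtE, wt, ← h, pow_add, ENNReal.toReal_mul, ENNReal.toReal_pow, ENNReal.toReal_pow]
  norm_num

lemma exitPath_nil_iff (N : ℕ) (x : ℤ) : IsExitPath N x [] ↔ (x = 0 ∨ x = (N : ℤ)) := by
  simp [IsExitPath]

lemma exitPath_boundary_eq_nil {N : ℕ} {x : ℤ} (hx : x = 0 ∨ x = (N : ℤ))
    {w : List Bool} (h : IsExitPath N x w) : w = [] := by
  rcases w with _ | ⟨b, t⟩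
  · rfl
  · exfalso
    have := h.1 0 (by simp)
    simp at this
    rcases hx with rfl | rfl <;> omega

lemma exitPath_cons_iff {N : ℕ} {x : ℤ} (hx0 : 0 < x) (hxN : x < (N : ℤ))
    (b : Bool) (w : List Bool) :
    IsExitPath N x (b :: w) ↔ IsExitPath N (x + stp b) w := by
  constructor
  · rintro ⟨h1, h2⟩
    refine ⟨fun k hk => ?_, ?_⟩
    · have := h1 (k + 1) (by simpa using Nat.succ_lt_succ hk)
      rwa [List.take_succ_cons, walkPos_cons] at this
    · rwa [walkPos_cons] at h2
  · rintro ⟨h1, h2⟩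
    refine ⟨fun k hk => ?_, ?_⟩
    · rcases k with _ | j
      · simpa using ⟨hx0, hxN⟩
      · have := h1 j (by simpa using Nat.lt_of_succ_lt_succ hk)
        rwa [List.take_succ_cons, walkPos_cons]
    · rwa [walkPos_cons]

lemma exitPath_prefix {N : ℕ} {x : ℤ} {w v : List Bool}
    (h1 : IsExitPath N x w) (h2 : IsExitPath N x v) (hp : w <+: v) : w = v := by
  obtain ⟨u, rfl⟩ := hp
  rcases u with _ | ⟨b, t⟩
  · simp
  · exfalso
    have hl : w.length < (w ++ b :: t).length := by simp
    have h := h2.1 w.length hl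
    rw [List.take_left] at h
    rcases h1.2 with h0 | h0 <;> omega

open Classical in
lemma kraft : ∀ (n : ℕ) (F : Finset (List Bool)), (∀ w ∈ F, w.length ≤ n) →
    (∀ w ∈ F, ∀ v ∈ F, w <+: v → w = v) → ∑ w ∈ F, wtE w ≤ 1 := by
  intro n
  induction n with
  | zero =>
    intro F hlen _
    have hF : F ⊆ {[]} := by
      intro w hw
      have := hlen w hw
      simp_all [List.length_eq_zero_iff]
    calc ∑ w ∈ F, wtE w ≤ ∑ w ∈ ({[]} : Finset (List Bool)), wtE w :=
          Finset.sum_le_sum_of_subset hF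
      _ = 1 := by simp [wtE]
  | succ n ih =>
    intro F hlen hpf
    by_cases hnil : [] ∈ F
    · have hF : F ⊆ {[]} := by
        intro w hw
        have := hpf [] hnil w hw (List.nil_prefix)
        simp [← this]
      calc ∑ w ∈ F, wtE w ≤ ∑ w ∈ ({[]} : Finset (List Bool)), wtE w :=
            Finset.sum_le_sum_of_subset hF
        _ = 1 := by simp [wtE]
    · -- every element is b :: t
      have hcons : ∀ w ∈ F, w ≠ ([] : List Bool) := fun w hw h => hnil (h ▸ hw)
      have key : ∀ b : Bool,
          ∑ w ∈ F.filter (fun w => w.head? = some b), wtE w ≤ 2⁻¹ := by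
        intro b
        set Fb := F.filter (fun w => w.head? = some b) with hFb
        have hmem : ∀ w ∈ Fb, w = b :: w.tail := by
          intro w hw
          rw [hFb, Finset.mem_filter] at hw
          rcases w with _ | ⟨c, t⟩
          · simp at hw
          · simp at hw ⊢; exact hw.2
        have hinj : ∀ w ∈ Fb, ∀ v ∈ Fb, w.tail = v.tail → w = v := by
          intro w hw v hv h
          rw [hmem w hw, hmem v hv, h]
        have himg : ∑ w ∈ Fb, wtE w = ∑ t ∈ Fb.image List.tail, wtE (b :: t) := by
          rw [Finset.sum_image (fun w hw v hv h => hinj w hw v hv h)]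
          exact Finset.sum_congr rfl fun w hw => by rw [← hmem w hw]
        have h1 : ∑ t ∈ Fb.image List.tail, wtE t ≤ 1 := by
          apply ih
          · intro t ht
            obtain ⟨w, hw, rfl⟩ := Finset.mem_image.mp ht
            have := hlen w (Finset.mem_filter.mp hw).1
            have hne := hcons w (Finset.mem_filter.mp hw).1
            rcases w with _ | ⟨c, s⟩
            · simp at hne
            · simp at this ⊢; omega
          · intro t ht v hv hp
            obtain ⟨w, hw, rfl⟩ := Finset.mem_image.mp ht
            obtain ⟨u, hu, rfl⟩ := Finset.mem_image.mp hv
            have h1 := hmem w hw; have h2 := hmem u hu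
            have : w <+: u := by
              rw [h1, h2]
              exact List.cons_prefix_cons.mpr ⟨rfl, hp⟩
            have := hpf w (Finset.mem_filter.mp hw).1 u (Finset.mem_filter.mp hu).1 this
            rw [this]
        calc ∑ w ∈ Fb, wtE w = ∑ t ∈ Fb.image List.tail, (2⁻¹ : ℝ≥0∞) * wtE t := by
              rw [himg]; exact Finset.sum_congr rfl fun t _ => wtE_cons b t
          _ = 2⁻¹ * ∑ t ∈ Fb.image List.tail, wtE t := by rw [Finset.mul_sum]
          _ ≤ 2⁻¹ * 1 := by exact mul_le_mul_right h1 _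
          _ = 2⁻¹ := mul_one _
      have hsplit : ∑ w ∈ F, wtE w =
          ∑ w ∈ F.filter (fun w => w.head? = some true), wtE w +
          ∑ w ∈ F.filter (fun w => w.head? = some false), wtE w := by
        rw [← Finset.sum_filter_add_sum_filter_not F (fun w => w.head? = some true)]
        congr 1
        apply Finset.sum_congr _ (fun _ _ => rfl)
        apply Finset.filter_congr
        intro w hw
        have := hcons w hw
        rcases w with _ | ⟨c, t⟩
        · simp at this
        · cases c <;> simp
      rw [hsplit]
      calc _ ≤ (2⁻¹ : ℝ≥0∞) + 2⁻¹ := add_le_add (key true) (key false)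
        _ = 1 := ENNReal.inv_two_add_inv_two

noncomputable def probE (N : ℕ) (x : ℤ) (S : List Bool → Prop) : ℝ≥0∞ :=
  ∑' w : List Bool, Set.indicator {w | IsExitPath N x w ∧ S w} wtE w

open Classical in
lemma probE_le_one (N : ℕ) (x : ℤ) (S : List Bool → Prop) : probE N x S ≤ 1 := by
  rw [probE, ENNReal.tsum_eq_iSup_sum]
  apply iSup_le
  intro F
  rw [Finset.sum_indicator_eq_sum_filter]
  apply kraft (F.sup List.length)
  · intro w hw
    exact Finset.le_sup (Finset.filter_subset _ _ hw)
  · intro w hw v hv hp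
    exact exitPath_prefix (Finset.mem_filter.mp hw).2.1 (Finset.mem_filter.mp hv).2.1 hp

lemma probE_ne_top (N : ℕ) (x : ℤ) (S : List Bool → Prop) : probE N x S ≠ ⊤ :=
  fun h => by simpa [h] using probE_le_one N x S

open Classical in
lemma prob_eq_toReal (N : ℕ) (x : ℤ) (S : List Bool → Prop) :
    prob N (1/2) x S = (probE N x S).toReal := by
  rw [prob, probE, ENNReal.tsum_toReal_eq]
  · apply tsum_congr
    intro w
    by_cases h : w ∈ {w | IsExitPath N x w ∧ S w}
    · simp only [Set.indicator_of_mem h, wt_half]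
    · simp [Set.indicator_of_notMem h]
  · intro w
    by_cases h : w ∈ {w | IsExitPath N x w ∧ S w}
    · simp only [Set.indicator_of_mem h]; exact wtE_ne_top w
    · simp [Set.indicator_of_notMem h]

lemma probE_congr {N : ℕ} {x : ℤ} {S T : List Bool → Prop}
    (h : ∀ w, IsExitPath N x w → (S w ↔ T w)) : probE N x S = probE N x T := by
  unfold probE
  have hset : {w | IsExitPath N x w ∧ S w} = {w | IsExitPath N x w ∧ T w} :=
    Set.ext fun w => and_congr_right (h w)
  rw [hset]

open Classical in
lemma probE_boundary {N : ℕ} {x : ℤ} (hx : x = 0 ∨ x = (N : ℤ)) (S : List Bool → Prop) :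
    probE N x S = if S [] then 1 else 0 := by
  rw [probE, tsum_eq_single ([] : List Bool)]
  · by_cases h : S []
    · rw [Set.indicator_of_mem (by exact ⟨(exitPath_nil_iff N x).mpr hx, h⟩)]
      simp [wtE, h]
    · rw [Set.indicator_of_notMem (fun hm => h hm.2)]
      simp [h]
  · intro w hw
    apply Set.indicator_of_notMem
    intro hm
    exact hw (exitPath_boundary_eq_nil hx hm.1)

lemma probE_rec {N : ℕ} {x : ℤ} (hx0 : 0 < x) (hxN : x < (N : ℤ)) (S : List Bool → Prop) :
    probE N x S = 2⁻¹ * probE N (x + 1) (fun w => S (true :: w))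
      + 2⁻¹ * probE N (x - 1) (fun w => S (false :: w)) := by
  have hnotnil : ∀ f : List Bool → ℝ≥0∞,
      (∑' w : List Bool, Set.indicator {w | IsExitPath N x w ∧ S w} wtE w) =
      ∑' q : Bool × List Bool, Set.indicator {w | IsExitPath N x w ∧ S w} wtE (q.1 :: q.2) := by
    intro f
    symm
    apply Function.Injective.tsum_eq (g := fun q : Bool × List Bool => q.1 :: q.2)
    · rintro ⟨b, w⟩ ⟨c, v⟩ h
      simp only [List.cons.injEq] at h
      simp [h.1, h.2]
    · intro w hw
      rcases w with _ | ⟨b, t⟩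
      · exfalso
        apply hw
        apply Set.indicator_of_notMem
        rintro ⟨he, -⟩
        rcases (exitPath_nil_iff N x).mp he with rfl | rfl <;> omega
      · exact ⟨(b, t), rfl⟩
  have hcons : ∀ (b : Bool), (∑' w : List Bool,
        Set.indicator {w | IsExitPath N x w ∧ S w} wtE (b :: w)) =
      2⁻¹ * probE N (x + stp b) (fun w => S (b :: w)) := by
    intro b
    rw [probE, ← ENNReal.tsum_mul_left]
    apply tsum_congr
    intro w
    have hiff : (b :: w) ∈ {w | IsExitPath N x w ∧ S w} ↔
        w ∈ {w | IsExitPath N (x + stp b) w ∧ S (b :: w)} := by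
      simp only [Set.mem_setOf_eq, exitPath_cons_iff hx0 hxN]
    by_cases h : (b :: w) ∈ {w | IsExitPath N x w ∧ S w}
    · rw [Set.indicator_of_mem h, Set.indicator_of_mem (hiff.mp h), wtE_cons]
    · rw [Set.indicator_of_notMem h,
        Set.indicator_of_notMem (fun hm => h (hiff.mpr hm)), mul_zero]
  rw [probE, hnotnil (fun _ => 0), ENNReal.tsum_prod', tsum_bool, hcons, hcons]
  simp only [stp]
  norm_num
  rw [add_comm, sub_eq_add_neg]

lemma mem_rangeSet_self (x : ℤ) (w : List Bool) : x ∈ rangeSet x w := by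
  simp only [rangeSet, Finset.mem_image]
  exact ⟨0, by simp⟩

@[simp] lemma rangeSet_nil (x : ℤ) : rangeSet x [] = {x} := by
  simp [rangeSet]

lemma mem_rangeSet_cons (m x : ℤ) (b : Bool) (w : List Bool) :
    m ∈ rangeSet x (b :: w) ↔ x = m ∨ m ∈ rangeSet (x + stp b) w := by
  simp only [rangeSet, Finset.mem_image, Finset.mem_range, List.length_cons]
  constructor
  · rintro ⟨k, hk, hv⟩
    rcases k with _ | j
    · left; simpa using hv
    · right
      refine ⟨j, by omega, ?_⟩
      rwa [List.take_succ_cons, walkPos_cons] at hv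
  · rintro (rfl | ⟨j, hj, hv⟩)
    · exact ⟨0, by omega, by simp⟩
    · exact ⟨j + 1, by omega, by rwa [List.take_succ_cons, walkPos_cons]⟩

lemma linear_of_harmonic (g : ℕ → ℝ) (M : ℕ)
    (hh : ∀ x, x + 2 ≤ M → 2 * g (x + 1) = g x + g (x + 2)) :
    ∀ x ≤ M, g x = g 0 + x * (g 1 - g 0) := by
  have hd : ∀ x, x + 1 ≤ M → g (x + 1) - g x = g 1 - g 0 := by
    intro x
    induction x with
    | zero => intro _; ring
    | succ n ih =>
      intro h
      have h2 := hh n (by omega)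
      have h3 := ih (by omega)
      linarith
  intro x
  induction x with
  | zero => intro _; simp
  | succ n ih =>
    intro h
    have h1 := hd n (by omega)
    have h2 := ih (by omega)
    have h3 : ((n : ℝ) + 1) * (g 1 - g 0) = (n : ℝ) * (g 1 - g 0) + (g 1 - g 0) := by ring
    push_cast
    rw [h3]
    linarith

lemma toReal_rec {a b c : ℝ≥0∞} (h : a = 2⁻¹ * b + 2⁻¹ * c) (hb : b ≠ ⊤) (hc : c ≠ ⊤) :
    2 * a.toReal = b.toReal + c.toReal := by
  have h2 : ((2:ℝ≥0∞)⁻¹).toReal = (2:ℝ)⁻¹ := by simp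
  rw [h, ENNReal.toReal_add (ENNReal.mul_ne_top (by simp) hb) (ENNReal.mul_ne_top (by simp) hc),
    ENNReal.toReal_mul, ENNReal.toReal_mul, h2]
  ring

noncomputable def Zr (N x : ℕ) : ℝ := (probE N (x:ℤ) (fun _ => True)).toReal

noncomputable def Fr (N m x : ℕ) : ℝ :=
  (probE N (x:ℤ) (fun w => (m:ℤ) ∈ rangeSet (x:ℤ) w)).toReal

lemma Zr_eq_one (N : ℕ) (hN : 0 < N) : ∀ x ≤ N, Zr N x = 1 := by
  have hZ0 : Zr N 0 = 1 := by
    rw [Zr, probE_boundary (Or.inl (by norm_num))]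
    simp
  have hZN : Zr N N = 1 := by
    rw [Zr, probE_boundary (Or.inr rfl)]
    simp
  have hrec : ∀ x, x + 2 ≤ N → 2 * Zr N (x + 1) = Zr N x + Zr N (x + 2) := by
    intro x hx
    have h : probE N ((x+1:ℕ):ℤ) (fun _ => True)
        = 2⁻¹ * probE N (((x+1:ℕ):ℤ) + 1) (fun _ => True)
        + 2⁻¹ * probE N (((x+1:ℕ):ℤ) - 1) (fun _ => True) :=
      probE_rec (by push_cast; omega) (by push_cast; omega) _
    have e1 : ((x+1:ℕ):ℤ) + 1 = ((x+2:ℕ):ℤ) := by push_cast; ring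
    have e2 : ((x+1:ℕ):ℤ) - 1 = ((x:ℕ):ℤ) := by push_cast; ring
    rw [e1, e2] at h
    have := toReal_rec h (probE_ne_top _ _ _) (probE_ne_top _ _ _)
    rw [Zr, Zr, Zr]
    linarith
  have hlin := linear_of_harmonic (Zr N) N hrec
  have h1 : Zr N 1 = 1 := by
    have := hlin N le_rfl
    rw [hZN, hZ0] at this
    have hN' : (0:ℝ) < N := by exact_mod_cast hN
    nlinarith
  intro x hx
  have := hlin x hx
  rw [hZ0, h1] at this
  simpa using this

lemma Fr_zero {N m : ℕ} (hm0 : 0 < m) : Fr N m 0 = 0 := by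
  rw [Fr, probE_boundary (Or.inl (by norm_num))]
  simp [hm0.ne']

lemma Fr_N {N m : ℕ} (hmN : m < N) : Fr N m N = 0 := by
  rw [Fr, probE_boundary (Or.inr rfl)]
  simp [hmN.ne]

lemma Fr_m {N m : ℕ} (hm0 : 0 < m) (hmN : m < N) : Fr N m m = 1 := by
  rw [Fr, probE_congr (T := fun _ => True)
    (fun w _ => iff_of_true (mem_rangeSet_self _ _) trivial)]
  have := Zr_eq_one N (by omega) m (by omega)
  rwa [Zr] at this

lemma Fr_rec {N m : ℕ} (hmN : m < N) :
    ∀ x, x + 2 ≤ N → x + 1 ≠ m → 2 * Fr N m (x + 1) = Fr N m x + Fr N m (x + 2) := by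
  intro x hx hne
  have h : probE N ((x+1:ℕ):ℤ) (fun w => (m:ℤ) ∈ rangeSet ((x+1:ℕ):ℤ) w)
      = 2⁻¹ * probE N (((x+1:ℕ):ℤ) + 1)
          (fun w => (m:ℤ) ∈ rangeSet ((x+1:ℕ):ℤ) (true :: w))
      + 2⁻¹ * probE N (((x+1:ℕ):ℤ) - 1)
          (fun w => (m:ℤ) ∈ rangeSet ((x+1:ℕ):ℤ) (false :: w)) :=
    probE_rec (by push_cast; omega) (by push_cast; omega) _
  have hA : ¬ (((x+1:ℕ):ℤ) = (m:ℤ)) := by exact_mod_cast hne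
  have e1 : probE N (((x+1:ℕ):ℤ) + 1)
      (fun w => (m:ℤ) ∈ rangeSet ((x+1:ℕ):ℤ) (true :: w))
      = probE N ((x+2:ℕ):ℤ) (fun w => (m:ℤ) ∈ rangeSet ((x+2:ℕ):ℤ) w) := by
    have hc : ((x+1:ℕ):ℤ) + 1 = ((x+2:ℕ):ℤ) := by push_cast; ring
    rw [hc]
    apply probE_congr
    intro w _
    rw [mem_rangeSet_cons]
    have hs : ((x+1:ℕ):ℤ) + stp true = ((x+2:ℕ):ℤ) := by simp [stp] <;> push_cast <;> ring
    rw [hs]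
    exact or_iff_right (fun h' => hA h')
  have e2 : probE N (((x+1:ℕ):ℤ) - 1)
      (fun w => (m:ℤ) ∈ rangeSet ((x+1:ℕ):ℤ) (false :: w))
      = probE N ((x:ℕ):ℤ) (fun w => (m:ℤ) ∈ rangeSet ((x:ℕ):ℤ) w) := by
    have hc : ((x+1:ℕ):ℤ) - 1 = ((x:ℕ):ℤ) := by push_cast; ring
    rw [hc]
    apply probE_congr
    intro w _
    rw [mem_rangeSet_cons]
    have hs : ((x+1:ℕ):ℤ) + stp false = ((x:ℕ):ℤ) := by simp [stp] <;> push_cast <;> ring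
    rw [hs]
    exact or_iff_right (fun h' => hA h')
  rw [e1, e2] at h
  have := toReal_rec h (probE_ne_top _ _ _) (probE_ne_top _ _ _)
  rw [Fr, Fr, Fr]
  linarith

lemma Fr_bot {N m : ℕ} (hm0 : 0 < m) (hmN : m < N) :
    ∀ x ≤ m, Fr N m x = (x : ℝ) / m := by
  have hrec : ∀ x, x + 2 ≤ m → 2 * Fr N m (x + 1) = Fr N m x + Fr N m (x + 2) := by
    intro x hx
    exact Fr_rec hmN x (by omega) (by omega)
  have hlin := linear_of_harmonic (Fr N m) m hrec
  have hm' : (0:ℝ) < m := by exact_mod_cast hm0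
  have h1 : Fr N m 1 = 1 / m := by
    have := hlin m le_rfl
    rw [Fr_m hm0 hmN, Fr_zero hm0] at this
    field_simp at this ⊢
    nlinarith
  intro x hx
  have := hlin x hx
  rw [Fr_zero hm0, h1] at this
  rw [this]
  field_simp
  ring

lemma Fr_top {N m : ℕ} (hm0 : 0 < m) (hmN : m < N) :
    ∀ j ≤ N - m, Fr N m (N - j) = (j : ℝ) / (N - m : ℕ) := by
  have hrec : ∀ j, j + 2 ≤ N - m →
      2 * Fr N m (N - (j + 1)) = Fr N m (N - j) + Fr N m (N - (j + 2)) := by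
    intro j hj
    have h := Fr_rec hmN (N - j - 2) (by omega) (by omega)
    have e1 : N - j - 2 + 1 = N - (j + 1) := by omega
    have e2 : N - j - 2 + 2 = N - j := by omega
    have e3 : N - j - 2 = N - (j + 2) := by omega
    rw [e1, e2, e3] at h
    linarith
  have hlin := linear_of_harmonic (fun j => Fr N m (N - j)) (N - m) hrec
  have hNm : (0:ℝ) < ((N - m : ℕ) : ℝ) := by
    have : 0 < N - m := by omega
    exact_mod_cast this
  have h0 : Fr N m (N - 0) = 0 := by
    simpa using Fr_N hmN
  have h1 : Fr N m (N - 1) = 1 / ((N - m : ℕ) : ℝ) := by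
    have := hlin (N - m) le_rfl
    rw [h0] at this
    have hNm' : N - (N - m) = m := by omega
    rw [hNm'] at this
    rw [Fr_m hm0 hmN] at this
    field_simp at this ⊢
    nlinarith
  intro j hj
  have := hlin j hj
  rw [h0, h1] at this
  rw [this]
  field_simp
  ring

lemma sum_Fr {N m : ℕ} (hm0 : 0 < m) (hmN : m < N) :
    ∑ x ∈ Finset.range (N + 1), Fr N m x = (N : ℝ) / 2 := by
  have hm' : (0:ℝ) < m := by exact_mod_cast hm0
  have hNm : (0:ℝ) < ((N - m : ℕ) : ℝ) := by
    have : 0 < N - m := by omega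
    exact_mod_cast this
  have hsplit := Finset.sum_range_add_sum_Ico (Fr N m) (show m + 1 ≤ N + 1 by omega)
  have S1 : ∑ x ∈ Finset.range (m + 1), Fr N m x = ((m : ℝ) + 1) / 2 := by
    have : ∀ x ∈ Finset.range (m + 1), Fr N m x = (x : ℝ) / m := by
      intro x hx
      exact Fr_bot hm0 hmN x (by simpa using Nat.lt_succ_iff.mp (Finset.mem_range.mp hx))
    rw [Finset.sum_congr rfl this, ← Finset.sum_div]
    have hg : (∑ x ∈ Finset.range (m + 1), (x:ℝ)) * 2 = ((m+1) : ℝ) * m := by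
      have h1 : ((∑ i ∈ Finset.range (m+1), i) * 2 : ℕ) = ((m+1) * m : ℕ) := by
        rw [Finset.sum_range_id_mul_two]; simp
      calc (∑ x ∈ Finset.range (m + 1), (x:ℝ)) * 2
          = (((∑ i ∈ Finset.range (m+1), i) * 2 : ℕ) : ℝ) := by push_cast; try ring
        _ = (((m+1) * m : ℕ) : ℝ) := by rw [h1]
        _ = ((m+1) : ℝ) * m := by push_cast; try ring
    field_simp
    nlinarith
  have S2 : ∑ x ∈ Finset.Ico (m + 1) (N + 1), Fr N m x = (((N - m : ℕ) : ℝ) - 1) / 2 := by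
    have hb : ∑ x ∈ Finset.Ico (m + 1) (N + 1), Fr N m x
        = ∑ j ∈ Finset.range (N - m), (j : ℝ) / ((N - m : ℕ) : ℝ) := by
      apply Finset.sum_bij' (i := fun x _ => N - x) (j := fun j _ => N - j)
      · intro x hx
        simp only [Finset.mem_Ico] at hx
        simp only [Finset.mem_range]
        omega
      · intro j hj
        simp only [Finset.mem_range] at hj
        simp only [Finset.mem_Ico]
        omega
      · intro x hx
        simp only [Finset.mem_Ico] at hx
        omega
      · intro j hj
        simp only [Finset.mem_range] at hj
        omega
      · intro x hx
        simp only [Finset.mem_Ico] at hx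
        have hx2 : N - (N - x) = x := by omega
        conv_lhs => rw [← hx2]
        exact Fr_top hm0 hmN (N - x) (by omega)
    rw [hb, ← Finset.sum_div]
    have hg : (∑ j ∈ Finset.range (N - m), (j:ℝ)) * 2 = ((N-m:ℕ) : ℝ) * (((N-m:ℕ):ℝ) - 1) := by
      have h1 := Finset.sum_range_id_mul_two (N - m)
      have h6 : ((N-m-1:ℕ):ℝ) = ((N-m:ℕ):ℝ) - 1 := by
        have he : N - m - 1 + 1 = N - m := by omega
        calc ((N-m-1:ℕ):ℝ) = ((N-m-1+1:ℕ):ℝ) - 1 := by push_cast; try ring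
          _ = _ := by rw [he]
      calc (∑ j ∈ Finset.range (N - m), (j:ℝ)) * 2
          = (((∑ i ∈ Finset.range (N - m), i) * 2 : ℕ) : ℝ) := by push_cast; try ring
        _ = (((N - m) * (N - m - 1) : ℕ) : ℝ) := by rw [h1]
        _ = ((N-m:ℕ) : ℝ) * (((N-m:ℕ):ℝ) - 1) := by push_cast [h6]; try ring
    field_simp
    nlinarith
  rw [← hsplit, S1, S2]
  have hc : ((N - m : ℕ) : ℝ) = (N:ℝ) - m := by
    push_cast [Nat.le_of_lt hmN]
    ring
  rw [hc]
  ring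


end Aux


lemma key {N m : ℕ} (hm0 : 0 < m) (hmN : m < N) :
    probUniform N (1/2) (fun x w => ((m:ℤ)) ∈ rangeSet x w) = (N : ℝ) / (2 * (N + 1)) := by
  have h1 : ∀ x ∈ Finset.range (N+1),
      prob N (1/2) (x:ℤ) ((fun (x : ℤ) w => ((m:ℤ)) ∈ rangeSet x w) (x:ℤ)) = Fr N m x := by
    intro x _
    exact prob_eq_toReal N (x:ℤ) _
  rw [probUniform, Finset.sum_congr rfl h1, sum_Fr hm0 hmN]
  have h2 : (0:ℝ) < (N:ℝ) + 1 := by positivity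
  field_simp

lemma lim_aux : Tendsto (fun N : ℕ => (N:ℝ) / (2 * ((N:ℝ) + 1))) atTop (𝓝 (1/2)) := by
  have h := tendsto_one_div_add_atTop_nhds_zero_nat (𝕜 := ℝ)
  have h2 : Tendsto (fun n : ℕ => 1/2 - (1 / ((n:ℝ)+1)) / 2) atTop (𝓝 (1/2 - 0/2)) :=
    tendsto_const_nhds.sub (h.div_const 2)
  norm_num at h2
  apply h2.congr
  intro n
  have hp : ((n:ℝ) + 1) ≠ 0 := by positivity
  field_simp
  try ring
  try tauto

/-- Remark 1.3 (symmetric case): for the symmetric walk started uniformly at random on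
`{0, …, N}`, the probability that the site `⌊βN⌋` is visited before exit tends to
`1/2`. -/
theorem point_visited_uniform_symmetric (β : ℝ) (hβ0 : 0 < β) (hβ1 : β < 1) :
    Tendsto (fun N : ℕ => probUniform N (1/2)
        fun x w => (⌊β * (N : ℝ)⌋ : ℤ) ∈ rangeSet x w)
      atTop (𝓝 (1/2)) := by
  have hev : ∀ᶠ N : ℕ in atTop, (fun N : ℕ => (N:ℝ) / (2 * ((N:ℝ) + 1))) N
      = probUniform N (1/2) (fun x w => (⌊β * (N : ℝ)⌋ : ℤ) ∈ rangeSet x w) := by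
    rw [eventually_atTop]
    refine ⟨⌈β⁻¹⌉₊ + 1, fun N hN => ?_⟩
    have hNpos : 0 < N := by omega
    have hN1 : (1:ℝ) ≤ β * N := by
      have hc : (β⁻¹ : ℝ) ≤ N := by
        calc (β⁻¹ : ℝ) ≤ (⌈β⁻¹⌉₊ : ℝ) := Nat.le_ceil _
          _ ≤ N := by exact_mod_cast Nat.le_of_succ_le hN
      calc (1:ℝ) = β * β⁻¹ := by field_simp
        _ ≤ β * N := mul_le_mul_of_nonneg_left hc hβ0.le
    have hfl1 : (1:ℤ) ≤ ⌊β * (N:ℝ)⌋ := Int.le_floor.mpr (by exact_mod_cast hN1)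
    have hflN : ⌊β * (N:ℝ)⌋ < (N:ℤ) := Int.floor_lt.mpr (by
      calc β * N < 1 * N := by
            apply mul_lt_mul_of_pos_right hβ1
            exact_mod_cast hNpos
        _ = ((N:ℤ) : ℝ) := by push_cast; ring)
    set m := (⌊β * (N:ℝ)⌋).toNat with hm
    have hmc : (m : ℤ) = ⌊β * (N:ℝ)⌋ := Int.toNat_of_nonneg (by omega)
    have hm0 : 0 < m := by omega
    have hmN : m < N := by omega
    symm
    calc probUniform N (1/2) (fun x w => (⌊β * (N : ℝ)⌋ : ℤ) ∈ rangeSet x w)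
        = probUniform N (1/2) (fun x w => ((m:ℤ)) ∈ rangeSet x w) := by rw [← hmc]
      _ = (N : ℝ) / (2 * ((N:ℝ) + 1)) := key hm0 hmN
  exact lim_aux.congr' hev
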